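/- Let H be a complex Hilbert space, S : ℝ → B(H) a strongly continuous one-parameter unitary group, and ρ a bounded positive self-adjoint operator on H commuting with S_t for every t. For finite families u_1,…,u_N, v_1,…,v_N and p_1,…,p_M, q_1,…,q_M in H, representing finite-rank operators X = Σ_j |u_j⟩⟨v_j| and Y = Σ_k |p_k⟩⟨q_k|, define F_{X,Y}(t) = Σ_{j,k} ⟨u_j, S_t p_k⟩ ⟨S_t q_k, ρ v_j⟩ (which equals Tr(ρ X* S_t Y S_t*)). If both t ↦ F_{X,Y}(t) and t ↦ F_{Y,X}(t) are integrable on ℝ, then for every ω ∈ ℝ the Hermitian symmetry holds: the complex conjugate of ∫_ℝ e^{−iωt} F_{X,Y}(t) dt equals ∫_ℝ e^{−iωt} F_{Y,X}(t) dt. -/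

import Mathlib

open MeasureTheory
open scoped InnerProductSpace

/-- Hermitian symmetry of the prescalar product
`⟨X,Y⟩_ω = ∫ e^{−iωt} Tr(ρ X* S_t Y S_t*) dt` on finite-rank operators
`X = Σ_j |u_j⟩⟨v_j|`, `Y = Σ_k |p_k⟩⟨q_k|`:
`conj ⟨X,Y⟩_ω = ⟨Y,X⟩_ω`. -/
theorem prescalar_product_hermitian_symmetry
    {H : Type*} [NormedAddCommGroup H] [InnerProductSpace ℂ H] [CompleteSpace H]
    (S : ℝ → (H →L[ℂ] H))
    (hS0 : S 0 = 1)
    (hSadd : ∀ s t : ℝ, S (s + t) = S s * S t)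
    (hSunitary : ∀ t : ℝ, S t ∈ unitary (H →L[ℂ] H))
    (hScont : ∀ x : H, Continuous fun t : ℝ => S t x)
    (ρ : H →L[ℂ] H) (hρ : ρ.IsPositive)
    (hρS : ∀ t : ℝ, ρ * S t = S t * ρ)
    (N M : ℕ) (u v : Fin N → H) (p q : Fin M → H)
    (hintXY : Integrable fun t : ℝ =>
      ∑ j, ∑ k, ⟪u j, S t (p k)⟫_ℂ * ⟪S t (q k), ρ (v j)⟫_ℂ)
    (hintYX : Integrable fun t : ℝ =>
      ∑ k, ∑ j, ⟪p k, S t (u j)⟫_ℂ * ⟪S t (v j), ρ (q k)⟫_ℂ)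
    (ω : ℝ) :
    (starRingEnd ℂ) (∫ t : ℝ, Complex.exp (-(Complex.I * ω * t)) *
        ∑ j, ∑ k, ⟪u j, S t (p k)⟫_ℂ * ⟪S t (q k), ρ (v j)⟫_ℂ) =
      ∫ t : ℝ, Complex.exp (-(Complex.I * ω * t)) *
        ∑ k, ∑ j, ⟪p k, S t (u j)⟫_ℂ * ⟪S t (v j), ρ (q k)⟫_ℂ := by
  -- star (S t) = S (-t)
  have hstar : ∀ t : ℝ, star (S t) = S (-t) := by
    intro t
    have h1 : S t * S (-t) = 1 := by
      rw [← hSadd]; simp [hS0]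
    have h2 : star (S t) * S t = 1 := (Unitary.mem_iff.mp (hSunitary t)).1
    calc star (S t) = star (S t) * (S t * S (-t)) := by rw [h1, mul_one]
      _ = (star (S t) * S t) * S (-t) := by rw [mul_assoc]
      _ = S (-t) := by rw [h2, one_mul]
  have hadj : ∀ t : ℝ, ContinuousLinearMap.adjoint (S t) = S (-t) := by
    intro t
    rw [← ContinuousLinearMap.star_eq_adjoint, hstar]
  have hρsa : ContinuousLinearMap.adjoint ρ = ρ := by
    have := hρ.isSelfAdjoint
    rwa [IsSelfAdjoint, ContinuousLinearMap.star_eq_adjoint] at this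
  rw [← integral_conj]
  rw [show (∫ t : ℝ, Complex.exp (-(Complex.I * ω * t)) *
        ∑ k, ∑ j, ⟪p k, S t (u j)⟫_ℂ * ⟪S t (v j), ρ (q k)⟫_ℂ)
      = ∫ t : ℝ, Complex.exp (-(Complex.I * ω * ((-t : ℝ) : ℂ))) *
        ∑ k, ∑ j, ⟪p k, S (-t) (u j)⟫_ℂ * ⟪S (-t) (v j), ρ (q k)⟫_ℂ from
    (integral_neg_eq_self (fun t : ℝ => Complex.exp (-(Complex.I * ω * t)) *
        ∑ k, ∑ j, ⟪p k, S t (u j)⟫_ℂ * ⟪S t (v j), ρ (q k)⟫_ℂ) volume).symm]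
  congr 1
  funext t
  rw [map_mul]
  congr 1
  · rw [← Complex.exp_conj]
    congr 1
    simp only [map_neg, map_mul, Complex.conj_I, Complex.conj_ofReal, Complex.ofReal_neg]
    ring
  · simp only [map_sum, map_mul]
    rw [Finset.sum_comm]
    refine Finset.sum_congr rfl fun k _ => Finset.sum_congr rfl fun j _ => ?_
    congr 1
    · rw [inner_conj_symm, ← hadj t, ContinuousLinearMap.adjoint_inner_right]
    · rw [inner_conj_symm]
      have h2 : ρ (S t (q k)) = S t (ρ (q k)) := by
        calc ρ (S t (q k)) = (ρ * S t) (q k) := rfl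
          _ = (S t * ρ) (q k) := by rw [hρS t]
          _ = S t (ρ (q k)) := rfl
      conv_lhs => rw [← hρsa]
      rw [ContinuousLinearMap.adjoint_inner_left, h2, ← hadj t,
        ContinuousLinearMap.adjoint_inner_left]
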